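/- Let n be a positive integer, A₋₁ an n×n complex matrix, A₂, A₃ : [-1,0] → ℂ^{n×n} matrix-valued functions with square-integrable entries, and Δ(λ) the characteristic matrix function. Then the following are equivalent: (a) there exists α > 0 such that every λ ∈ ℂ with det Δ(λ) = 0 satisfies Re λ ≤ −α; (b) every λ ∈ ℂ with det Δ(λ) = 0 satisfies Re λ < 0, and every eigenvalue μ of A₋₁ satisfies |μ| < 1. -/

import Mathlib

set_option maxHeartbeats 1000000
open MeasureTheory Complex Set Filter Metric Topology

lemma RL (g : ℝ → ℂ) :
    Tendsto (fun t : ℝ => ∫ s : ℝ, Complex.exp ((t : ℂ) * s * Complex.I) * g s)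
      (cocompact ℝ) (𝓝 0) := by
  have hc : (-(1 / (2 * Real.pi)) : ℝ) ≠ 0 := by simp [Real.pi_ne_zero]
  have hmap : Tendsto (fun t : ℝ => -(1 / (2 * Real.pi)) * t) (cocompact ℝ) (cocompact ℝ) :=
    (Homeomorph.mulLeft₀ _ hc).map_cocompact.le
  have h := (Real.tendsto_integral_exp_smul_cocompact g).comp hmap
  convert h using 2 with t
  congr 1 with s
  rw [Circle.smul_def, Real.fourierChar_apply]
  congr 1
  push_cast
  have : (Real.pi : ℂ) ≠ 0 := by exact_mod_cast Real.pi_ne_zero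
  field_simp

lemma integrable_exp_mul (g : ℝ → ℂ) (hg : IntegrableOn g (Ioc (-1:ℝ) 0)) (lam : ℂ) :
    IntegrableOn (fun s : ℝ => Complex.exp (lam * s) * g s) (Ioc (-1:ℝ) 0) := by
  apply Integrable.bdd_mul (c := Real.exp |lam.re|) hg
    (Complex.continuous_exp.comp (continuous_const.mul Complex.continuous_ofReal)).aestronglyMeasurable
  · rw [ae_restrict_iff' measurableSet_Ioc]
    filter_upwards with s hs
    simp only [Function.comp_apply, Pi.mul_apply]
    rw [Complex.norm_exp]
    apply Real.exp_le_exp.2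
    have h1 : (lam * s).re = lam.re * s := by simp
    rw [h1]
    rcases le_or_gt 0 lam.re with h | h
    · nlinarith [hs.2, abs_nonneg lam.re, le_abs_self lam.re]
    · nlinarith [hs.1, neg_abs_le lam.re, abs_nonneg lam.re]

lemma strip (g : ℝ → ℂ) (hg : IntegrableOn g (Ioc (-1:ℝ) 0)) (c : ℝ) :
    Tendsto (fun p : ℝ × ℝ =>
        ∫ s in Ioc (-1:ℝ) 0, Complex.exp (((p.1 : ℂ) + (p.2 : ℂ) * Complex.I) * s) * g s)
      (𝓝 c ×ˢ cocompact ℝ) (𝓝 0) := by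
  set Φ : ℝ → ℝ → ℂ := fun a t =>
    ∫ s in Ioc (-1:ℝ) 0, Complex.exp (((a : ℂ) + (t : ℂ) * Complex.I) * s) * g s with hΦ
  -- Part A : fixed real part c
  have partA : Tendsto (fun t => Φ c t) (cocompact ℝ) (𝓝 0) := by
    have key : ∀ t : ℝ, Φ c t
        = ∫ s : ℝ, Complex.exp ((t : ℂ) * s * Complex.I) *
            (Ioc (-1:ℝ) 0).indicator (fun s : ℝ => Complex.exp ((c : ℂ) * s) * g s) s := by
      intro t
      rw [hΦ]
      simp only
      rw [← integral_indicator measurableSet_Ioc]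
      congr 1 with s
      by_cases hs : s ∈ Ioc (-1:ℝ) 0
      · simp only [indicator_of_mem hs]
        rw [← mul_assoc, ← Complex.exp_add]
        ring_nf
      · simp [indicator_of_notMem hs]
    simp_rw [key]
    exact RL _
  -- Part B : error integral
  set D : ℝ → ℝ := fun a =>
    ∫ s in Ioc (-1:ℝ) 0, ‖(Complex.exp ((a : ℂ) * s) - Complex.exp ((c : ℂ) * s)) * g s‖ with hD
  have measD : ∀ a : ℝ, AEStronglyMeasurable
      (fun s : ℝ => ‖(Complex.exp ((a : ℂ) * s) - Complex.exp ((c : ℂ) * s)) * g s‖)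
      (volume.restrict (Ioc (-1:ℝ) 0)) := by
    intro a
    apply AEStronglyMeasurable.norm
    apply AEStronglyMeasurable.mul _ hg.1
    apply Continuous.aestronglyMeasurable
    continuity
  have partB : Tendsto D (𝓝 c) (𝓝 0) := by
    have hD0 : D c = 0 := by simp [hD]
    have : ContinuousAt D c := by
      apply continuousAt_of_dominated (bound := fun s => 2 * Real.exp (|c| + 1) * ‖g s‖)
      · exact Eventually.of_forall measD
      · filter_upwards [eventually_abs_sub_lt c one_pos] with a ha
        rw [ae_restrict_iff' measurableSet_Ioc]
        filter_upwards with s hs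
        have hb : ∀ b : ℝ, |b| ≤ |c| + 1 → ‖Complex.exp ((b : ℂ) * s)‖ ≤ Real.exp (|c| + 1) := by
          intro b hble
          rw [Complex.norm_exp]
          apply Real.exp_le_exp.2
          have h1 : ((b : ℂ) * s).re = b * s := by simp
          rw [h1]
          calc b * s ≤ |b * s| := le_abs_self _
            _ = |b| * |s| := abs_mul _ _
            _ ≤ (|c| + 1) * 1 := by
                apply mul_le_mul hble _ (abs_nonneg _) (by positivity)
                rw [abs_le]; constructor <;> nlinarith [hs.1, hs.2]
            _ = |c| + 1 := mul_one _
        have h2 : |a| ≤ |c| + 1 := by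
          have h := abs_sub_abs_le_abs_sub a c
          linarith [ha.le]
        have h3 : |c| ≤ |c| + 1 := by linarith
        rw [norm_norm, norm_mul]
        apply mul_le_mul _ le_rfl (norm_nonneg _) (by positivity)
        calc ‖_‖ ≤ ‖Complex.exp ((a:ℂ)*s)‖ + ‖Complex.exp ((c:ℂ)*s)‖ :=
              norm_sub_le _ _
          _ ≤ Real.exp (|c|+1) + Real.exp (|c|+1) := add_le_add (hb a h2) (hb c h3)
          _ = 2 * Real.exp (|c| + 1) := by ring
      · exact (hg.norm.const_mul _)
      · rw [ae_restrict_iff' measurableSet_Ioc]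
        filter_upwards with s _
        apply Continuous.continuousAt
        continuity
    rw [← hD0]
    exact this.tendsto
  -- Part C : combine
  have hsub : Tendsto (fun p : ℝ × ℝ => Φ p.1 p.2 - Φ c p.2) (𝓝 c ×ˢ cocompact ℝ) (𝓝 0) := by
    refine squeeze_zero_norm (a := fun p : ℝ × ℝ => D p.1) ?_ (partB.comp tendsto_fst)
    rintro ⟨a, t⟩
    simp only [hΦ, hD]
    rw [← integral_sub (integrable_exp_mul g hg _) (integrable_exp_mul g hg _)]
    refine (norm_integral_le_integral_norm _).trans (le_of_eq ?_)
    congr 1 with s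
    have : Complex.exp (((a : ℂ) + (t : ℂ) * Complex.I) * s) * g s
          - Complex.exp (((c : ℂ) + (t : ℂ) * Complex.I) * s) * g s
        = Complex.exp ((t : ℂ) * s * Complex.I) *
          ((Complex.exp ((a : ℂ) * s) - Complex.exp ((c : ℂ) * s)) * g s) := by
      rw [sub_mul, mul_sub, ← mul_assoc, ← mul_assoc, ← Complex.exp_add, ← Complex.exp_add]
      ring_nf
    rw [this, norm_mul]
    have ht : ‖Complex.exp ((t : ℂ) * s * Complex.I)‖ = 1 := by
      rw [Complex.norm_exp]
      have : ((t : ℂ) * s * Complex.I).re = 0 := by simp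
      rw [this, Real.exp_zero]
    rw [ht, one_mul]
  have hc2 : Tendsto (fun p : ℝ × ℝ => Φ c p.2) (𝓝 c ×ˢ cocompact ℝ) (𝓝 0) :=
    partA.comp tendsto_snd
  have := hsub.add hc2
  simpa using this

variable {n : ℕ}

lemma spec_iff_det (A : Matrix (Fin n) (Fin n) ℂ) (μ : ℂ) :
    μ ∈ spectrum ℂ A ↔ (μ • (1 : Matrix (Fin n) (Fin n) ℂ) - A).det = 0 := by
  rw [spectrum.mem_iff, Algebra.algebraMap_eq_smul_one, Matrix.isUnit_iff_isUnit_det,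
    isUnit_iff_ne_zero, not_ne_iff]

lemma cont_det' : Continuous (fun M : (Fin n → Fin n → ℂ) => (Matrix.of M).det) := by
  simp_rw [Matrix.det_apply']
  apply continuous_finset_sum
  intro σ _
  apply Continuous.mul continuous_const
  apply continuous_finset_prod
  intro i _
  exact (continuous_apply i).comp (continuous_apply (σ i))

lemma spec_bound (A : Matrix (Fin n) (Fin n) ℂ) (hA : ∀ μ ∈ spectrum ℂ A, ‖μ‖ < 1) :
    ∃ ρ : ℝ, 0 ≤ ρ ∧ ρ < 1 ∧ ∀ μ ∈ spectrum ℂ A, ‖μ‖ ≤ ρ := by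
  have hfin : (spectrum ℂ A).Finite := A.finite_spectrum
  set F : Finset ℝ := insert 0 (hfin.toFinset.image norm) with hF
  have hne : F.Nonempty := ⟨0, Finset.mem_insert_self _ _⟩
  refine ⟨F.max' hne, ?_, ?_, ?_⟩
  · exact F.le_max' 0 (Finset.mem_insert_self _ _)
  · rcases Finset.mem_insert.1 (F.max'_mem hne) with h | h
    · rw [h]; norm_num
    · obtain ⟨μ, hμ, hμ2⟩ := Finset.mem_image.1 h
      rw [← hμ2]; exact hA μ (hfin.mem_toFinset.1 hμ)
  · intro μ hμ
    exact F.le_max' _ (Finset.mem_insert_of_mem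
      (Finset.mem_image_of_mem _ (hfin.mem_toFinset.2 hμ)))

lemma spec_unit (A : Matrix (Fin n) (Fin n) ℂ) {ρ : ℝ} (hρ0 : 0 ≤ ρ) (hρ : ρ < 1)
    (hA : ∀ μ ∈ spectrum ℂ A, ‖μ‖ ≤ ρ) (w : ℂ)
    (hw : ‖w‖ ≤ 2 / (1 + ρ)) :
    ((1 : Matrix (Fin n) (Fin n) ℂ) - w • A).det ≠ 0 := by
  by_cases hw0 : w = 0
  · simp [hw0]
  · have h1 : 0 < ‖w‖ := by
      simpa using hw0
    have h2 : (0:ℝ) < 1 + ρ := by linarith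
    have habs : ‖w⁻¹‖ > ρ := by
      rw [norm_inv, gt_iff_lt, ← one_div, lt_div_iff₀ h1]
      calc ρ * ‖w‖ ≤ ρ * (2 / (1 + ρ)) := mul_le_mul_of_nonneg_left hw hρ0
        _ < 1 := by rw [mul_div_assoc'] ; rw [div_lt_one h2]; linarith
    have hnotin : w⁻¹ ∉ spectrum ℂ A := fun h => absurd (hA _ h) (not_le.2 habs)
    rw [spec_iff_det] at hnotin
    have hid : (1 : Matrix (Fin n) (Fin n) ℂ) - w • A
        = (-w) • (A - w⁻¹ • (1 : Matrix (Fin n) (Fin n) ℂ)) := by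
      ext i j
      simp only [Matrix.sub_apply, Matrix.smul_apply, Matrix.one_apply, smul_eq_mul]
      field_simp
      ring
    rw [hid, Matrix.det_smul]
    apply mul_ne_zero (pow_ne_zero _ (neg_ne_zero.2 hw0))
    rw [(neg_sub (w⁻¹ • (1 : Matrix (Fin n) (Fin n) ℂ)) A).symm, Matrix.det_neg]
    exact mul_ne_zero (pow_ne_zero _ (by norm_num)) hnotin

lemma inv_pert (A : Matrix (Fin n) (Fin n) ℂ) (r : ℝ)
    (hr : ∀ w : ℂ, ‖w‖ ≤ r → ((1 : Matrix (Fin n) (Fin n) ℂ) - w • A).det ≠ 0) :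
    ∃ δ > 0, ∀ (w : ℂ) (E : Matrix (Fin n) (Fin n) ℂ), ‖w‖ ≤ r →
      (∀ i j, ‖E i j‖ ≤ δ) →
      ((1 : Matrix (Fin n) (Fin n) ℂ) - w • A - E).det ≠ 0 := by
  classical
  set G : ℂ × (Fin n → Fin n → ℂ) → ℂ := fun p =>
    (Matrix.of (fun i j => (1 : Matrix (Fin n) (Fin n) ℂ) i j - p.1 * A i j - p.2 i j)).det
    with hG
  have hcont : Continuous G := by
    apply cont_det'.comp
    apply continuous_pi; intro i
    apply continuous_pi; intro j
    exact (continuous_const.sub (continuous_fst.mul continuous_const)).sub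
      ((continuous_apply j).comp ((continuous_apply i).comp continuous_snd))
  have hU : IsOpen {p : ℂ × (Fin n → Fin n → ℂ) | G p ≠ 0} :=
    ((isClosed_singleton (x := (0:ℂ))).preimage hcont).isOpen_compl
  have hS : IsCompact ((closedBall (0:ℂ) r) ×ˢ ({0} : Set (Fin n → Fin n → ℂ))) :=
    (isCompact_closedBall _ _).prod isCompact_singleton
  have hmat : ∀ (w : ℂ) (E : Fin n → Fin n → ℂ),
      Matrix.of (fun i j => (1 : Matrix (Fin n) (Fin n) ℂ) i j - w * A i j - E i j)
        = (1 : Matrix (Fin n) (Fin n) ℂ) - w • A - Matrix.of E := by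
    intro w E
    ext i j
    simp [Matrix.sub_apply, Matrix.smul_apply, smul_eq_mul]
  have hsub : (closedBall (0:ℂ) r) ×ˢ ({0} : Set (Fin n → Fin n → ℂ)) ⊆
      {p | G p ≠ 0} := by
    rintro ⟨w, E⟩ ⟨hw, hE⟩
    simp only [mem_singleton_iff] at hE
    subst hE
    simp only [mem_setOf_eq, hG, hmat]
    have h0 : (Matrix.of (0 : Fin n → Fin n → ℂ)) = (0 : Matrix (Fin n) (Fin n) ℂ) := rfl
    rw [h0, sub_zero]
    apply hr
    rw [mem_closedBall, Complex.dist_eq, sub_zero] at hw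
    exact hw
  obtain ⟨δ, hδ, hsubset⟩ := hS.exists_cthickening_subset_open hU hsub
  refine ⟨δ/2, by linarith, fun w E hw hE => ?_⟩
  have hmem : (w, (fun i j => E i j : Fin n → Fin n → ℂ)) ∈
      cthickening δ ((closedBall (0:ℂ) r) ×ˢ ({0} : Set (Fin n → Fin n → ℂ))) := by
    apply mem_cthickening_of_dist_le _ (w, (0 : Fin n → Fin n → ℂ))
    · exact ⟨by rwa [mem_closedBall, Complex.dist_eq, sub_zero], rfl⟩
    · rw [Prod.dist_eq]
      simp only [dist_self]
      rw [max_le_iff]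
      refine ⟨by linarith, ?_⟩
      rw [dist_pi_le_iff (by linarith)]
      intro i
      rw [dist_pi_le_iff (by linarith)]
      intro j
      simpa [Complex.dist_eq] using (hE i j).trans (by linarith)
  have := hsubset hmem
  simp only [mem_setOf_eq, hG, hmat] at this
  have hEof : Matrix.of (fun i j => E i j) = E := rfl
  rwa [hEof] at this

/-- The characteristic matrix function `Δ(λ)` of the neutral type system. -/
noncomputable def Delta {n : ℕ} (Am1 : Matrix (Fin n) (Fin n) ℂ)
    (A2 A3 : ℝ → Matrix (Fin n) (Fin n) ℂ) (lam : ℂ) : Matrix (Fin n) (Fin n) ℂ :=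
  (-lam) • (1 : Matrix (Fin n) (Fin n) ℂ)
    + (lam * Complex.exp (-lam)) • Am1
    + lam • Matrix.of (fun i j => ∫ s in Set.Ioc (-1:ℝ) 0, Complex.exp (lam * s) * A2 s i j)
    + Matrix.of (fun i j => ∫ s in Set.Ioc (-1:ℝ) 0, Complex.exp (lam * s) * A3 s i j)

noncomputable def Mint {n : ℕ} (B : ℝ → Matrix (Fin n) (Fin n) ℂ) (lam : ℂ) :
    Matrix (Fin n) (Fin n) ℂ :=
  Matrix.of (fun i j => ∫ s in Set.Ioc (-1:ℝ) 0, Complex.exp (lam * s) * B s i j)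

noncomputable def NN {n : ℕ} (Am1 : Matrix (Fin n) (Fin n) ℂ)
    (A2 A3 : ℝ → Matrix (Fin n) (Fin n) ℂ) (lam : ℂ) : Matrix (Fin n) (Fin n) ℂ :=
  1 - Complex.exp (-lam) • Am1 - Mint A2 lam - lam⁻¹ • Mint A3 lam

variable {n : ℕ} (Am1 : Matrix (Fin n) (Fin n) ℂ) (A2 A3 : ℝ → Matrix (Fin n) (Fin n) ℂ)

lemma delta_factor {lam : ℂ} (h : lam ≠ 0) :
    Delta Am1 A2 A3 lam = (-lam) • NN Am1 A2 A3 lam := by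
  unfold Delta NN
  ext i j
  simp only [Matrix.add_apply, Matrix.sub_apply, Matrix.smul_apply, Matrix.one_apply,
    Matrix.of_apply, smul_eq_mul, Mint, Matrix.of_apply]
  by_cases hij : i = j <;> simp only [hij, if_true, if_false, reduceIte] <;> field_simp <;> ring

lemma det_delta {lam : ℂ} (h : lam ≠ 0) :
    (Delta Am1 A2 A3 lam).det = (-lam)^n * (NN Am1 A2 A3 lam).det := by
  rw [delta_factor Am1 A2 A3 h, Matrix.det_smul, Fintype.card_fin]

lemma det_delta_zero_iff {lam : ℂ} (h : lam ≠ 0) :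
    (Delta Am1 A2 A3 lam).det = 0 ↔ (NN Am1 A2 A3 lam).det = 0 := by
  rw [det_delta Am1 A2 A3 h]
  simp [pow_eq_zero_iff, neg_eq_zero, h]

lemma NN_apply (lam : ℂ) (i j : Fin n) :
    NN Am1 A2 A3 lam i j = (1 : Matrix (Fin n) (Fin n) ℂ) i j
      - Complex.exp (-lam) * Am1 i j
      - (∫ s in Set.Ioc (-1:ℝ) 0, Complex.exp (lam * s) * A2 s i j)
      - lam⁻¹ * (∫ s in Set.Ioc (-1:ℝ) 0, Complex.exp (lam * s) * A3 s i j) := by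
  simp [NN, Mint, Matrix.sub_apply, Matrix.smul_apply, smul_eq_mul]

lemma diff_exp_integral (g : ℝ → ℂ) (hg : IntegrableOn g (Ioc (-1:ℝ) 0)) :
    Differentiable ℂ (fun z : ℂ => ∫ s in Ioc (-1:ℝ) 0, Complex.exp (z * s) * g s) := by
  intro z0
  have key := hasDerivAt_integral_of_dominated_loc_of_deriv_le
    (F := fun (z : ℂ) (s : ℝ) => Complex.exp (z * s) * g s)
    (F' := fun (z : ℂ) (s : ℝ) => (s : ℂ) * Complex.exp (z * s) * g s)
    (x₀ := z0) (bound := fun s => Real.exp (|z0.re| + 1) * ‖g s‖)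
    (μ := volume.restrict (Ioc (-1:ℝ) 0)) (ball_mem_nhds z0 one_pos)
    ?_ (integrable_exp_mul g hg z0) ?_ ?_ (hg.norm.const_mul _) ?_
  · exact key.2.differentiableAt
  · filter_upwards with z
    exact ((Complex.continuous_exp.comp (continuous_const.mul
      Complex.continuous_ofReal)).aestronglyMeasurable).mul hg.1
  · apply AEStronglyMeasurable.mul _ hg.1
    apply Continuous.aestronglyMeasurable
    exact Complex.continuous_ofReal.mul (Complex.continuous_exp.comp
      (continuous_const.mul Complex.continuous_ofReal))
  · rw [ae_restrict_iff' measurableSet_Ioc]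
    filter_upwards with s hs
    intro z hz
    rw [norm_mul, norm_mul]
    have h1 : ‖(s:ℂ)‖ ≤ 1 := by
      rw [Complex.norm_real, Real.norm_eq_abs, abs_le]
      constructor <;> nlinarith [hs.1, hs.2]
    have h2 : ‖Complex.exp (z * s)‖ ≤ Real.exp (|z0.re| + 1) := by
      rw [Complex.norm_exp, Real.exp_le_exp]
      have hre : (z * s).re = z.re * s := by simp
      rw [hre]
      have hzre : |z.re| ≤ |z0.re| + 1 := by
        have := abs_re_le_norm (z - z0)
        have h3 : ‖z - z0‖ < 1 := by
          rw [mem_ball, Complex.dist_eq] at hz; exact hz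
        have h4 : |(z - z0).re| < 1 := lt_of_le_of_lt this h3
        rw [Complex.sub_re] at h4
        cases' abs_lt.1 h4 with h5 h6
        rw [abs_le]
        constructor <;> nlinarith [le_abs_self z0.re, neg_abs_le z0.re]
      calc z.re * s ≤ |z.re * s| := le_abs_self _
        _ = |z.re| * |s| := abs_mul _ _
        _ ≤ (|z0.re| + 1) * 1 := by
            apply mul_le_mul hzre _ (abs_nonneg _) (by positivity)
            rw [abs_le]; constructor <;> nlinarith [hs.1, hs.2]
        _ = |z0.re| + 1 := mul_one _
    calc ‖(s:ℂ)‖ * ‖Complex.exp (z * s)‖ * ‖g s‖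
        ≤ 1 * Real.exp (|z0.re| + 1) * ‖g s‖ := by
          apply mul_le_mul (mul_le_mul h1 h2 (norm_nonneg _) zero_le_one) le_rfl (norm_nonneg _)
          positivity
      _ = Real.exp (|z0.re| + 1) * ‖g s‖ := by ring
  · rw [ae_restrict_iff' measurableSet_Ioc]
    filter_upwards with s _
    intro z hz
    have h : HasDerivAt (fun z : ℂ => Complex.exp (z * s)) ((s : ℂ) * Complex.exp (z * s)) z := by
      have h0 : HasDerivAt (fun z : ℂ => z * (s:ℂ)) (s:ℂ) z := by
        simpa using (hasDerivAt_id z).mul_const (s:ℂ)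
      simpa [mul_comm] using h0.cexp
    simpa [mul_assoc] using h.mul_const (g s)

lemma Mint_bound (g : ℝ → ℂ) (hg : IntegrableOn g (Ioc (-1:ℝ) 0)) (c1 c2 : ℝ) {lam : ℂ}
    (h1 : c1 ≤ lam.re) (h2 : lam.re ≤ c2) :
    ‖∫ s in Ioc (-1:ℝ) 0, Complex.exp (lam * s) * g s‖
      ≤ Real.exp (max |c1| |c2|) * ∫ s in Ioc (-1:ℝ) 0, ‖g s‖ := by
  refine (norm_integral_le_integral_norm _).trans ?_
  rw [← integral_const_mul]
  apply setIntegral_mono_on (integrable_exp_mul g hg lam).norm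
    (hg.norm.const_mul _) measurableSet_Ioc
  intro s hs
  rw [norm_mul]
  apply mul_le_mul _ le_rfl (norm_nonneg _) (by positivity)
  rw [Complex.norm_exp, Real.exp_le_exp]
  have hre : (lam * s).re = lam.re * s := by simp
  rw [hre]
  rcases le_or_gt 0 lam.re with h | h
  · have : lam.re * s ≤ 0 := mul_nonpos_of_nonneg_of_nonpos h hs.2
    have : (0:ℝ) ≤ max |c1| |c2| := le_trans (abs_nonneg c1) (le_max_left _ _)
    linarith
  · calc lam.re * s ≤ lam.re * (-1) := by nlinarith [hs.1]
      _ = -lam.re := by ring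
      _ ≤ -c1 := by linarith
      _ ≤ |c1| := neg_le_abs c1
      _ ≤ max |c1| |c2| := le_max_left _ _

lemma det_tendsto {ι : Type*} {l : Filter ι} (M : ι → Matrix (Fin n) (Fin n) ℂ)
    (L : Matrix (Fin n) (Fin n) ℂ)
    (h : ∀ i j, Tendsto (fun k => M k i j) l (𝓝 (L i j))) :
    Tendsto (fun k => (M k).det) l (𝓝 L.det) := by
  have h1 : Tendsto (fun k => (fun i j => M k i j : Fin n → Fin n → ℂ)) l
      (𝓝 (fun i j => L i j)) := by
    rw [tendsto_pi_nhds]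
    intro i
    rw [tendsto_pi_nhds]
    exact fun j => h i j
  have := (cont_det'.tendsto (fun i j => L i j)).comp h1
  exact this

lemma det_differentiableOn {S : Set ℂ} (M : ℂ → Matrix (Fin n) (Fin n) ℂ)
    (h : ∀ i j, DifferentiableOn ℂ (fun z => M z i j) S) :
    DifferentiableOn ℂ (fun z => (M z).det) S := by
  simp_rw [Matrix.det_apply']
  apply DifferentiableOn.fun_sum
  intro σ _
  apply DifferentiableOn.const_mul
  apply DifferentiableOn.fun_finsetProd
  intro i _
  exact h (σ i) i

lemma det_differentiable (M : ℂ → Matrix (Fin n) (Fin n) ℂ)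
    (h : ∀ i j, Differentiable ℂ (fun z => M z i j)) :
    Differentiable ℂ (fun z => (M z).det) := by
  simp_rw [Matrix.det_apply']
  apply Differentiable.fun_sum
  intro σ _
  apply Differentiable.const_mul
  apply Differentiable.fun_finsetProd
  intro i _
  exact h (σ i) i

lemma cocompact_of_atTop {ι : Type*} {l : Filter ι} {f : ι → ℝ}
    (h : Tendsto f l atTop) : Tendsto f l (cocompact ℝ) := by
  rw [cocompact_eq_atBot_atTop]
  exact h.mono_right le_sup_right

lemma Mint_entry_tendsto (g : ℝ → ℂ) (hg : IntegrableOn g (Ioc (-1:ℝ) 0)) (c : ℝ)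
    {ι : Type*} {l : Filter ι} (lam : ι → ℂ)
    (hre : Tendsto (fun k => (lam k).re) l (𝓝 c))
    (him : Tendsto (fun k => (lam k).im) l (cocompact ℝ)) :
    Tendsto (fun k => ∫ s in Ioc (-1:ℝ) 0, Complex.exp (lam k * s) * g s) l (𝓝 0) := by
  have hpair : Tendsto (fun k => ((lam k).re, (lam k).im)) l ((𝓝 c) ×ˢ (cocompact ℝ)) :=
    hre.prodMk him
  have h := (strip g hg c).comp hpair
  convert h using 2 with k
  simp [Complex.re_add_im]

lemma norm_atTop_of_im {ι : Type*} {l : Filter ι} (lam : ι → ℂ)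
    (him : Tendsto (fun k => (lam k).im) l (cocompact ℝ)) :
    Tendsto (fun k => ‖lam k‖) l atTop := by
  have h1 : Tendsto (fun k => ‖(lam k).im‖) l atTop :=
    (tendsto_norm_cocompact_atTop).comp him
  apply tendsto_atTop_mono _ h1
  intro k
  rw [Real.norm_eq_abs]
  exact Complex.abs_im_le_norm _

lemma inv_Mint_entry_tendsto (g : ℝ → ℂ) (hg : IntegrableOn g (Ioc (-1:ℝ) 0)) (c : ℝ)
    {ι : Type*} {l : Filter ι} (lam : ι → ℂ)
    (hre : Tendsto (fun k => (lam k).re) l (𝓝 c))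
    (him : Tendsto (fun k => (lam k).im) l (cocompact ℝ)) :
    Tendsto (fun k => (lam k)⁻¹ * ∫ s in Ioc (-1:ℝ) 0, Complex.exp (lam k * s) * g s)
      l (𝓝 0) := by
  have hnorm : Tendsto (fun k => ‖lam k‖) l atTop := norm_atTop_of_im lam him
  have hinv : Tendsto (fun k => ‖(lam k)⁻¹‖) l (𝓝 0) := by
    simp_rw [norm_inv]
    exact tendsto_inv_atTop_zero.comp hnorm
  have hev : ∀ᶠ k in l, ‖(lam k)⁻¹ * ∫ s in Ioc (-1:ℝ) 0, Complex.exp (lam k * s) * g s‖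
      ≤ ‖(lam k)⁻¹‖ * (Real.exp (max |c-1| |c+1|) * ∫ s in Ioc (-1:ℝ) 0, ‖g s‖) := by
    have hmem : Icc (c-1) (c+1) ∈ 𝓝 c := Icc_mem_nhds (by linarith) (by linarith)
    filter_upwards [hre hmem] with k hk
    rw [norm_mul]
    apply mul_le_mul le_rfl _ (norm_nonneg _) (norm_nonneg _)
    exact Mint_bound g hg (c-1) (c+1) hk.1 hk.2
  have hlim : Tendsto (fun k => ‖(lam k)⁻¹‖ *
      (Real.exp (max |c-1| |c+1|) * ∫ s in Ioc (-1:ℝ) 0, ‖g s‖)) l (𝓝 0) := by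
    have := hinv.mul_const (Real.exp (max |c-1| |c+1|) * ∫ s in Ioc (-1:ℝ) 0, ‖g s‖)
    simpa using this
  exact squeeze_zero_norm' hev hlim

lemma Delta_apply (lam : ℂ) (i j : Fin n) :
    Delta Am1 A2 A3 lam i j = (-lam) * (1 : Matrix (Fin n) (Fin n) ℂ) i j
      + (lam * Complex.exp (-lam)) * Am1 i j
      + lam * (∫ s in Ioc (-1:ℝ) 0, Complex.exp (lam * s) * A2 s i j)
      + (∫ s in Ioc (-1:ℝ) 0, Complex.exp (lam * s) * A3 s i j) := by
  simp [Delta, Matrix.add_apply, Matrix.smul_apply, smul_eq_mul]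

lemma delta_det_continuous
    (hI2 : ∀ i j, IntegrableOn (fun s => A2 s i j) (Ioc (-1:ℝ) 0))
    (hI3 : ∀ i j, IntegrableOn (fun s => A3 s i j) (Ioc (-1:ℝ) 0)) :
    Continuous (fun lam => (Delta Am1 A2 A3 lam).det) := by
  have hent : ∀ i j, Continuous (fun lam : ℂ => Delta Am1 A2 A3 lam i j) := by
    intro i j
    simp_rw [Delta_apply]
    apply Continuous.add
    apply Continuous.add
    apply Continuous.add
    · exact continuous_neg.mul continuous_const
    · exact (continuous_id.mul (Complex.continuous_exp.comp continuous_neg)).mul continuous_const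
    · exact continuous_id.mul (diff_exp_integral _ (hI2 i j)).continuous
    · exact (diff_exp_integral _ (hI3 i j)).continuous
  have h := cont_det'.comp (continuous_pi fun i => continuous_pi fun j => hent i j)
  exact h

lemma backward (hn : 0 < n)
    (hI2 : ∀ i j, IntegrableOn (fun s => A2 s i j) (Ioc (-1:ℝ) 0))
    (hI3 : ∀ i j, IntegrableOn (fun s => A3 s i j) (Ioc (-1:ℝ) 0))
    (hb1 : ∀ lam : ℂ, (Delta Am1 A2 A3 lam).det = 0 → lam.re < 0)
    (hb2 : ∀ μ ∈ spectrum ℂ Am1, ‖μ‖ < 1) :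
    ∃ α : ℝ, 0 < α ∧ ∀ lam : ℂ, (Delta Am1 A2 A3 lam).det = 0 → lam.re ≤ -α := by
  by_contra hcon
  push_neg at hcon
  have hsel : ∀ k : ℕ, ∃ lam : ℂ, (Delta Am1 A2 A3 lam).det = 0 ∧
      -(1/(k+1) : ℝ) < lam.re := by
    intro k
    obtain ⟨lam, h1, h2⟩ := hcon (1/(k+1) : ℝ) (by positivity)
    exact ⟨lam, h1, by linarith⟩
  choose lam hz hre using hsel
  have hreneg : ∀ k, (lam k).re < 0 := fun k => hb1 _ (hz k)
  have hcontf : Continuous (fun z => (Delta Am1 A2 A3 z).det) :=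
    delta_det_continuous Am1 A2 A3 hI2 hI3
  have hrelb : ∀ k : ℕ, -(1/(k+1) : ℝ) ≤ (lam k).re := fun k => (hre k).le
  by_cases hbdd : ∃ C : ℝ, {k : ℕ | |(lam k).im| ≤ C}.Infinite
  · -- bounded imaginary parts case : accumulation point on the imaginary axis
    obtain ⟨C, hC⟩ := hbdd
    set p : ℕ → Prop := fun k => |(lam k).im| ≤ C with hp
    have hCinf : {k | p k}.Infinite := hC
    set φ : ℕ → ℕ := Nat.nth p with hφ
    have hmem : ∀ j, p (φ j) := fun j => Nat.nth_mem_of_infinite hCinf j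
    have hmono : StrictMono φ := Nat.nth_strictMono hCinf
    set K : Set ℂ := {z : ℂ | z.re ∈ Icc (-1:ℝ) 0 ∧ z.im ∈ Icc (-|C|) |C|} with hK
    have hKc : IsCompact K := by
      apply Metric.isCompact_of_isClosed_isBounded
      · exact ((isClosed_Icc.preimage Complex.continuous_re).inter
          (isClosed_Icc.preimage Complex.continuous_im))
      · apply (Metric.isBounded_closedBall (x := (0:ℂ)) (r := 1 + |C|)).subset
        rintro z ⟨hz1, hz2⟩
        rw [mem_closedBall, Complex.dist_eq, sub_zero]
        calc ‖z‖ ≤ |z.re| + |z.im| := Complex.norm_le_abs_re_add_abs_im z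
          _ ≤ 1 + |C| := by
              apply add_le_add
              · rw [abs_le]; exact ⟨by linarith [hz1.1], by linarith [hz1.2]⟩
              · rw [abs_le]; exact ⟨hz2.1, hz2.2⟩
    have hxK : ∀ j, lam (φ j) ∈ K := by
      intro j
      refine ⟨⟨?_, (hreneg (φ j)).le⟩, abs_le.1 ((hmem j).trans (le_abs_self C))⟩
      have := hrelb (φ j)
      have h1 : (1:ℝ)/(φ j + 1) ≤ 1 := by
        rw [div_le_one (by positivity)]
        have : (0:ℝ) ≤ (φ j : ℝ) := Nat.cast_nonneg _
        linarith
      linarith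
    obtain ⟨zstar, hzstarK, ψ, hψmono, hconv⟩ := hKc.tendsto_subseq hxK
    have hfz : (Delta Am1 A2 A3 zstar).det = 0 := by
      have h1 : Tendsto (fun j => (Delta Am1 A2 A3 (lam (φ (ψ j)))).det) atTop
          (𝓝 ((Delta Am1 A2 A3 zstar).det)) := (hcontf.tendsto zstar).comp hconv
      have h2 : (fun j => (Delta Am1 A2 A3 (lam (φ (ψ j)))).det) = fun _ => (0:ℂ) := by
        funext j; exact hz _
      rw [h2] at h1
      exact (tendsto_nhds_unique tendsto_const_nhds h1).symm
    have hre0 : zstar.re = 0 := by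
      have h1 : Tendsto (fun j => (lam (φ (ψ j))).re) atTop (𝓝 zstar.re) :=
        (Complex.continuous_re.tendsto zstar).comp hconv
      have h2 : Tendsto (fun j => (lam (φ (ψ j))).re) atTop (𝓝 0) := by
        apply tendsto_of_tendsto_of_tendsto_of_le_of_le
          (g := fun j : ℕ => -(1/(j+1) : ℝ)) (h := fun _ => (0:ℝ))
        · have : Tendsto (fun j : ℕ => (1/(j+1) : ℝ)) atTop (𝓝 0) :=
            tendsto_one_div_add_atTop_nhds_zero_nat
          simpa using this.neg
        · exact tendsto_const_nhds
        · intro j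
          have hj : (j : ℝ) + 1 ≤ (φ (ψ j) : ℝ) + 1 := by
            have h3 : j ≤ φ (ψ j) := le_trans (hψmono.le_apply) (hmono.le_apply)
            have := Nat.cast_le (α := ℝ) |>.2 h3
            linarith
          have h4 : (1:ℝ)/(φ (ψ j) + 1) ≤ 1/(j+1) :=
            one_div_le_one_div_of_le (by positivity) hj
          calc -(1/(j+1) : ℝ) ≤ -(1/(φ (ψ j) + 1) : ℝ) := by linarith
            _ ≤ (lam (φ (ψ j))).re := hrelb _
        · exact fun j => (hreneg _).le
      exact tendsto_nhds_unique h1 h2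
    have := hb1 zstar hfz
    rw [hre0] at this
    exact absurd this (lt_irrefl 0)
  · -- unbounded imaginary parts case
    push_neg at hbdd
    have him : Tendsto (fun k => (lam k).im) atTop (cocompact ℝ) := by
      rw [Filter.hasBasis_cocompact.tendsto_right_iff]
      intro K hKc
      obtain ⟨C, hC⟩ := hKc.isBounded.subset_closedBall 0
      have hfin : {k : ℕ | (lam k).im ∈ K}.Finite := by
        apply (hbdd C).subset
        intro k hk
        have := hC hk
        rwa [mem_closedBall, Real.dist_eq, sub_zero] at this
      have := hfin.eventually_cofinite_notMem
      rw [Nat.cofinite_eq_atTop] at this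
      exact this
    have hre0 : Tendsto (fun k => (lam k).re) atTop (𝓝 0) := by
      apply tendsto_of_tendsto_of_tendsto_of_le_of_le
        (g := fun k : ℕ => -(1/(k+1) : ℝ)) (h := fun _ => (0:ℝ))
      · have : Tendsto (fun j : ℕ => (1/(j+1) : ℝ)) atTop (𝓝 0) :=
          tendsto_one_div_add_atTop_nhds_zero_nat
        simpa using this.neg
      · exact tendsto_const_nhds
      · exact hrelb
      · exact fun k => (hreneg k).le
    obtain ⟨ρ, hρ0, hρ1, hρb⟩ := spec_bound Am1 hb2
    obtain ⟨δ, hδ, hpert⟩ := inv_pert Am1 (2/(1+ρ))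
      (fun w hw => spec_unit Am1 hρ0 hρ1 hρb w hw)
    -- entries of the perturbation tend to zero
    have hE : ∀ i j, Tendsto (fun k => Mint A2 (lam k) i j
        + (lam k)⁻¹ * Mint A3 (lam k) i j) atTop (𝓝 0) := by
      intro i j
      have h1 := Mint_entry_tendsto (fun s => A2 s i j) (hI2 i j) 0 lam hre0 him
      have h2 := inv_Mint_entry_tendsto (fun s => A3 s i j) (hI3 i j) 0 lam hre0 him
      simpa [Mint] using h1.add h2
    have hEev : ∀ᶠ k in atTop, ∀ i j, ‖
        (Mint A2 (lam k) i j + (lam k)⁻¹ * Mint A3 (lam k) i j)‖ ≤ δ := by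
      rw [Filter.eventually_all]
      intro i
      rw [Filter.eventually_all]
      intro j
      have := (hE i j).norm
      simp only [norm_zero] at this
      filter_upwards [this.eventually_le_const (by linarith : (0:ℝ) < δ)] with k hk
      exact hk
    have hwev : ∀ᶠ k in atTop, ‖Complex.exp (-(lam k))‖ ≤ 2/(1+ρ) := by
      have h1 : Tendsto (fun k => Real.exp (-(lam k).re)) atTop (𝓝 1) := by
        have hneg : Tendsto (fun k => -(lam k).re) atTop (𝓝 0) := by
          simpa using hre0.neg
        have := (Real.continuous_exp.tendsto 0).comp hneg
        simpa [Function.comp_def] using this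
      have h2 : (1:ℝ) < 2/(1+ρ) := by
        rw [lt_div_iff₀ (by linarith)]
        linarith
      have h3 := h1.eventually_le_const h2
      filter_upwards [h3] with k hk
      rwa [Complex.norm_exp, Complex.neg_re]
    obtain ⟨k, hk1, hk2⟩ := (hwev.and hEev).exists
    have hlamne : lam k ≠ 0 := by
      intro h
      have := hreneg k
      rw [h] at this
      simp at this
    have hNN : (NN Am1 A2 A3 (lam k)).det ≠ 0 := by
      have hid : NN Am1 A2 A3 (lam k) = (1 : Matrix (Fin n) (Fin n) ℂ)
          - Complex.exp (-(lam k)) • Am1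
          - (Mint A2 (lam k) + (lam k)⁻¹ • Mint A3 (lam k)) := by
        unfold NN
        rw [sub_sub (1 - Complex.exp (-(lam k)) • Am1)]
      rw [hid]
      apply hpert _ _ hk1
      intro i j
      have := hk2 i j
      simpa [Matrix.add_apply, Matrix.smul_apply, smul_eq_mul] using this
    exact hNN ((det_delta_zero_iff Am1 A2 A3 hlamne).1 (hz k))

lemma one_sub_inv_smul_det (v : ℂ) (hv : v ≠ 0) :
    ((1 : Matrix (Fin n) (Fin n) ℂ) - v⁻¹ • Am1).det
      = (v⁻¹)^n * (v • (1 : Matrix (Fin n) (Fin n) ℂ) - Am1).det := by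
  have hid : (1 : Matrix (Fin n) (Fin n) ℂ) - v⁻¹ • Am1
      = v⁻¹ • (v • (1 : Matrix (Fin n) (Fin n) ℂ) - Am1) := by
    ext i j
    simp only [Matrix.sub_apply, Matrix.smul_apply, Matrix.one_apply, smul_eq_mul]
    field_simp
  rw [hid, Matrix.det_smul, Fintype.card_fin]

lemma Fkey (hI2 : ∀ i j, IntegrableOn (fun s => A2 s i j) (Ioc (-1:ℝ) 0))
    (hI3 : ∀ i j, IntegrableOn (fun s => A3 s i j) (Ioc (-1:ℝ) 0))
    (zs : ℕ → ℂ) (kk : ℕ → ℕ) (zstar : ℂ)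
    (hzs : Tendsto zs atTop (𝓝 zstar)) (hkk : Tendsto kk atTop atTop) :
    Tendsto (fun j => (NN Am1 A2 A3 (zs j + ((2*Real.pi*(kk j) : ℝ) : ℂ) * Complex.I)).det)
      atTop (𝓝 (((1 : Matrix (Fin n) (Fin n) ℂ) - Complex.exp (-zstar) • Am1).det)) := by
  set w : ℕ → ℂ := fun j => zs j + ((2*Real.pi*(kk j) : ℝ) : ℂ) * Complex.I with hw
  have hre : Tendsto (fun j => (w j).re) atTop (𝓝 zstar.re) := by
    have h1 : ∀ j, (w j).re = (zs j).re := by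
      intro j; simp [hw]
    simp_rw [h1]
    exact (Complex.continuous_re.tendsto zstar).comp hzs
  have him : Tendsto (fun j => (w j).im) atTop (cocompact ℝ) := by
    apply cocompact_of_atTop
    have h1 : ∀ j, (w j).im = (zs j).im + 2*Real.pi*(kk j) := by
      intro j; simp [hw]
    simp_rw [h1]
    apply Filter.tendsto_atTop_add_left_of_le' atTop (zstar.im - 1)
    · have := (Complex.continuous_im.tendsto zstar).comp hzs
      filter_upwards [this.eventually (eventually_ge_nhds (by linarith : zstar.im - 1 < zstar.im))] with j hj
      exact hj
    · have h2 : Tendsto (fun j : ℕ => 2*Real.pi*(j:ℝ)) atTop atTop := by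
        apply Tendsto.const_mul_atTop (by positivity)
        exact tendsto_natCast_atTop_atTop
      exact h2.comp hkk
  have hper : ∀ j, Complex.exp (-(w j)) = Complex.exp (-(zs j)) := by
    intro j
    rw [hw]
    simp only
    rw [neg_add, Complex.exp_add]
    have : Complex.exp (-(((2*Real.pi*(kk j) : ℝ) : ℂ) * Complex.I)) = 1 := by
      rw [← Complex.exp_int_mul_two_pi_mul_I (-(kk j : ℤ))]
      congr 1
      push_cast
      ring
    rw [this, mul_one]
  apply det_tendsto
  intro i j
  have hentry : ∀ k, NN Am1 A2 A3 (w k) i j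
      = (1 : Matrix (Fin n) (Fin n) ℂ) i j - Complex.exp (-(zs k)) * Am1 i j
        - (∫ s in Ioc (-1:ℝ) 0, Complex.exp (w k * s) * A2 s i j)
        - (w k)⁻¹ * (∫ s in Ioc (-1:ℝ) 0, Complex.exp (w k * s) * A3 s i j) := by
    intro k
    rw [NN_apply, hper]
  refine Tendsto.congr (fun k => (hentry k).symm) ?_
  have hlim2 : Tendsto (fun k => ∫ s in Ioc (-1:ℝ) 0, Complex.exp (w k * s) * A2 s i j)
      atTop (𝓝 0) := Mint_entry_tendsto (fun s => A2 s i j) (hI2 i j) zstar.re w hre him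
  have hlim3 : Tendsto (fun k => (w k)⁻¹ * ∫ s in Ioc (-1:ℝ) 0, Complex.exp (w k * s) * A3 s i j)
      atTop (𝓝 0) := inv_Mint_entry_tendsto (fun s => A3 s i j) (hI3 i j) zstar.re w hre him
  have hlim1 : Tendsto (fun k => Complex.exp (-(zs k)) * Am1 i j) atTop
      (𝓝 (Complex.exp (-zstar) * Am1 i j)) := by
    apply Tendsto.mul_const
    exact (Complex.continuous_exp.tendsto _).comp (hzs.neg)
  have hL : ((1 : Matrix (Fin n) (Fin n) ℂ) - Complex.exp (-zstar) • Am1) i j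
      = (1 : Matrix (Fin n) (Fin n) ℂ) i j - Complex.exp (-zstar) * Am1 i j := by
    simp [Matrix.sub_apply, Matrix.smul_apply, smul_eq_mul]
  rw [hL]
  have hconst : Tendsto (fun _ : ℕ => (1 : Matrix (Fin n) (Fin n) ℂ) i j) atTop
      (𝓝 ((1 : Matrix (Fin n) (Fin n) ℂ) i j)) := tendsto_const_nhds
  have hfin := ((hconst.sub hlim1).sub hlim2).sub hlim3
  simpa using hfin

lemma forward2 (hn : 0 < n)
    (hI2 : ∀ i j, IntegrableOn (fun s => A2 s i j) (Ioc (-1:ℝ) 0))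
    (hI3 : ∀ i j, IntegrableOn (fun s => A3 s i j) (Ioc (-1:ℝ) 0))
    (α : ℝ) (hα : 0 < α)
    (hzero : ∀ lam : ℂ, (Delta Am1 A2 A3 lam).det = 0 → lam.re ≤ -α) :
    ∀ μ ∈ spectrum ℂ Am1, ‖μ‖ < 1 := by
  intro μ hμ
  by_contra habs
  push_neg at habs
  have hμ0 : μ ≠ 0 := by
    intro h
    rw [h] at habs
    simp at habs
    linarith
  set z0 := Complex.log μ with hz0
  have hexpz0 : Complex.exp z0 = μ := Complex.exp_log hμ0
  have hz0re : 0 ≤ z0.re := by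
    rw [hz0, Complex.log_re]
    exact Real.log_nonneg habs
  set hinf : ℂ → ℂ := fun z => ((1 : Matrix (Fin n) (Fin n) ℂ) - Complex.exp (-z) • Am1).det
    with hhinf
  have hdiff : Differentiable ℂ hinf := by
    apply det_differentiable
    intro i j
    have heq : (fun z : ℂ => ((1 : Matrix (Fin n) (Fin n) ℂ) - Complex.exp (-z) • Am1) i j)
        = fun z : ℂ => (1 : Matrix (Fin n) (Fin n) ℂ) i j - Complex.exp (-z) * Am1 i j := by
      funext z
      simp [Matrix.sub_apply, Matrix.smul_apply, smul_eq_mul]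
    rw [heq]
    exact (differentiable_const _).sub
      ((Complex.differentiable_exp.comp differentiable_neg).mul_const _)
  have hcont : Continuous hinf := hdiff.continuous
  have hz00 : hinf z0 = 0 := by
    have he : Complex.exp (-z0) = μ⁻¹ := by rw [Complex.exp_neg, hexpz0]
    rw [hhinf]
    simp only
    rw [he, one_sub_inv_smul_det Am1 μ hμ0]
    rw [(spec_iff_det Am1 μ).1 hμ, mul_zero]
  have hnontriv : ∀ ε > 0, ∃ z, dist z z0 < ε ∧ z ≠ z0 ∧ hinf z ≠ 0 := by
    intro ε hε
    have hinj : Function.Injective (fun t : ℝ => μ * (Real.exp t : ℂ)) := by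
      intro a b h
      simp only [mul_eq_mul_left_iff, or_iff_left hμ0] at h
      have : Real.exp a = Real.exp b := by exact_mod_cast h
      exact Real.exp_injective this
    have hbad : {t : ℝ | μ * (Real.exp t : ℂ) ∈ spectrum ℂ Am1}.Finite :=
      Am1.finite_spectrum.preimage hinj.injOn
    have hIoo : (Ioo (0:ℝ) ε).Infinite := Set.Ioo_infinite hε
    obtain ⟨t, ht⟩ := (hIoo.diff hbad).nonempty
    obtain ⟨⟨ht0, htε⟩, htbad⟩ := ht
    have hvne : μ * (Real.exp t : ℂ) ≠ 0 := by
      apply mul_ne_zero hμ0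
      exact_mod_cast Real.exp_ne_zero t
    refine ⟨z0 + t, ?_, ?_, ?_⟩
    · rw [Complex.dist_eq]
      simp only [add_sub_cancel_left]
      rw [Complex.norm_real, Real.norm_eq_abs, abs_of_pos ht0]
      exact htε
    · intro h
      have : (t : ℂ) = 0 := by
        have := congrArg (fun z => z - z0) h
        simpa using this
      exact ht0.ne' (by exact_mod_cast this)
    · have he : Complex.exp (-(z0 + t)) = (μ * (Real.exp t : ℂ))⁻¹ := by
        rw [Complex.exp_neg, Complex.exp_add, hexpz0, ← Complex.ofReal_exp]
      rw [hhinf]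
      simp only
      rw [he, one_sub_inv_smul_det Am1 _ hvne]
      apply mul_ne_zero (pow_ne_zero _ (inv_ne_zero hvne))
      intro hdet
      exact htbad ((spec_iff_det Am1 _).2 hdet)
  have hA : AnalyticAt ℂ hinf z0 := hdiff.analyticAt z0
  rcases hA.eventually_eq_zero_or_eventually_ne_zero with hcase | hcase
  · exfalso
    rw [Metric.eventually_nhds_iff] at hcase
    obtain ⟨ε, hε, hball⟩ := hcase
    obtain ⟨z, hz1, _, hz3⟩ := hnontriv ε hε
    exact hz3 (hball hz1)
  · rw [eventually_nhdsWithin_iff, Metric.eventually_nhds_iff] at hcase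
    obtain ⟨ε1, hε1, hball⟩ := hcase
    set r := min (ε1/2) (α/2) with hrdef
    have hrpos : 0 < r := lt_min (by linarith) (by linarith)
    have hrε : r < ε1 := lt_of_le_of_lt (min_le_left _ _) (by linarith)
    have hrα : r ≤ α/2 := min_le_right _ _
    have hsphne : ∀ z ∈ sphere z0 r, hinf z ≠ 0 := by
      intro z hzs
      rw [mem_sphere] at hzs
      apply hball (by rw [hzs]; exact hrε)
      intro hzz0
      rw [mem_singleton_iff] at hzz0
      rw [hzz0] at hzs
      rw [dist_self] at hzs
      exact hrpos.ne' hzs.symm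
    have hsne : (sphere z0 r).Nonempty := NormedSpace.sphere_nonempty.2 hrpos.le
    obtain ⟨zm, hzm, hzmin⟩ := (isCompact_sphere z0 r).exists_isMinOn hsne
      ((continuous_norm.comp hcont).continuousOn)
    set m := ‖hinf zm‖ with hmdef
    have hm : 0 < m := by
      rw [hmdef]
      exact norm_pos_iff.mpr (hsphne zm hzm)
    set F : ℕ → ℂ → ℂ := fun k z =>
      (NN Am1 A2 A3 (z + ((2*Real.pi*(k:ℝ) : ℝ) : ℂ) * Complex.I)).det with hFdef
    -- uniform convergence on the sphere
    have hCONV : ∀ ε > 0, ∀ᶠ k : ℕ in atTop, ∀ z ∈ sphere z0 r,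
        ‖F k z - hinf z‖ ≤ ε := by
      intro ε hε
      by_contra hnot
      rw [Filter.not_eventually] at hnot
      have hfreq : ∃ᶠ k in atTop, ∃ z ∈ sphere z0 r, ε < ‖F k z - hinf z‖ := by
        apply hnot.mono
        intro k hk
        push_neg at hk
        exact hk
      obtain ⟨φ, hφmono, hφ⟩ := extraction_of_frequently_atTop hfreq
      choose zs hzs hgt using hφ
      obtain ⟨zstar, hzstar, ψ, hψmono, hconv⟩ := (isCompact_sphere z0 r).tendsto_subseq hzs
      have hF := Fkey Am1 A2 A3 hI2 hI3 (fun j => zs (ψ j)) (fun j => φ (ψ j)) zstar hconv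
        ((hφmono.comp hψmono).tendsto_atTop)
      have hH : Tendsto (fun j => hinf (zs (ψ j))) atTop (𝓝 (hinf zstar)) :=
        (hcont.tendsto zstar).comp hconv
      have hdiff0 : Tendsto (fun j => F (φ (ψ j)) (zs (ψ j)) - hinf (zs (ψ j))) atTop (𝓝 0) := by
        have h2 := hF.sub hH
        rw [sub_self] at h2
        exact h2
      have habs0 : Tendsto (fun j => ‖F (φ (ψ j)) (zs (ψ j)) - hinf (zs (ψ j))‖)
          atTop (𝓝 0) := by
        have := hdiff0.norm
        simpa using this
      have := (habs0.eventually_le_const hε).exists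
      obtain ⟨j, hj⟩ := this
      exact absurd (hgt (ψ j)) (not_lt.2 hj)
    -- pointwise convergence at the center
    have hPT : Tendsto (fun k => F k z0) atTop (𝓝 0) := by
      have := Fkey Am1 A2 A3 hI2 hI3 (fun _ => z0) id z0 tendsto_const_nhds tendsto_id
      rw [show (((1 : Matrix (Fin n) (Fin n) ℂ) - Complex.exp (-z0) • Am1).det) = hinf z0 from rfl,
        hz00] at this
      exact this
    -- nonvanishing of the shift
    have hNZ : ∀ᶠ k : ℕ in atTop, ∀ z ∈ closedBall z0 r,
        z + ((2*Real.pi*(k:ℝ) : ℝ) : ℂ) * Complex.I ≠ 0 := by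
      have h2πk : Tendsto (fun k : ℕ => 2*Real.pi*(k:ℝ)) atTop atTop := by
        apply Tendsto.const_mul_atTop (by positivity)
        exact tendsto_natCast_atTop_atTop
      filter_upwards [h2πk.eventually_gt_atTop (|z0.im| + r)] with k hk z hz
      intro h0
      have him : (z + ((2*Real.pi*(k:ℝ) : ℝ) : ℂ) * Complex.I).im = z.im + 2*Real.pi*(k:ℝ) := by
        simp
      have hzim : |z.im - z0.im| ≤ r := by
        rw [mem_closedBall, Complex.dist_eq] at hz
        calc |z.im - z0.im| = |(z - z0).im| := by rw [Complex.sub_im]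
          _ ≤ ‖z - z0‖ := Complex.abs_im_le_norm _
          _ ≤ r := hz
      have : (0:ℝ) < z.im + 2*Real.pi*(k:ℝ) := by
        have h1 : -(|z0.im| + r) ≤ z.im := by
          cases' abs_le.1 hzim with h2 h3
          have := neg_abs_le z0.im
          linarith
        linarith
      rw [h0] at him
      simp at him
      linarith [him]
    have hPTev : ∀ᶠ k : ℕ in atTop, ‖F k z0‖ < m/2 := by
      have := hPT.norm
      simp only [norm_zero] at this
      have h2 := this.eventually_lt_const (half_pos hm)
      apply h2.mono
      intro k hk
      exact hk
    obtain ⟨k, hkconv, hkpt, hknz⟩ := ((hCONV (m/2) (half_pos hm)).and (hPTev.and hNZ)).exists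
    by_cases hexz : ∃ z ∈ ball z0 r, F k z = 0
    · obtain ⟨z, hzball, hFz⟩ := hexz
      set lam := z + ((2*Real.pi*(k:ℝ) : ℝ) : ℂ) * Complex.I with hlam
      have hlamne : lam ≠ 0 := hknz z (ball_subset_closedBall hzball)
      have hdelta : (Delta Am1 A2 A3 lam).det = 0 :=
        (det_delta_zero_iff Am1 A2 A3 hlamne).2 hFz
      have hre := hzero lam hdelta
      have hrelam : lam.re = z.re := by simp [hlam]
      have hzre : z0.re - r ≤ z.re := by
        rw [mem_ball, Complex.dist_eq] at hzball
        have : |z.re - z0.re| ≤ ‖z - z0‖ := by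
          rw [← Complex.sub_re]
          exact Complex.abs_re_le_norm _
        linarith [abs_le.1 (this.trans hzball.le) |>.1]
      rw [hrelam] at hre
      linarith
    · push_neg at hexz
      have hFlow : ∀ z ∈ sphere z0 r, m/2 ≤ ‖F k z‖ := by
        intro z hz
        have h1 := hkconv z hz
        have h2 : m ≤ ‖hinf z‖ := hzmin hz
        have h3 : ‖hinf z‖ ≤ ‖F k z‖ + ‖F k z - hinf z‖ := by
          calc ‖hinf z‖ = ‖F k z - (F k z - hinf z)‖ := by ring_nf
            _ ≤ ‖F k z‖ + ‖F k z - hinf z‖ :=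
                norm_sub_le _ _
        linarith
      have hFcl : ∀ z ∈ closedBall z0 r, F k z ≠ 0 := by
        intro z hz
        rcases lt_or_eq_of_le (mem_closedBall.1 hz) with h | h
        · exact hexz z (mem_ball.2 h)
        · have : z ∈ sphere z0 r := mem_sphere.2 h
          have := hFlow z this
          intro h0
          rw [h0] at this
          simp at this
          linarith
      have hFdiffC : DifferentiableOn ℂ (F k) (closedBall z0 r) := by
        apply det_differentiableOn (M := fun z => NN Am1 A2 A3 (z + ((2*Real.pi*(k:ℝ) : ℝ) : ℂ) * Complex.I))
        intro i j
        have heq : (fun z : ℂ =>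
            NN Am1 A2 A3 (z + ((2*Real.pi*(k:ℝ) : ℝ) : ℂ) * Complex.I) i j)
            = fun z : ℂ => (1 : Matrix (Fin n) (Fin n) ℂ) i j
              - Complex.exp (-(z + ((2*Real.pi*(k:ℝ) : ℝ) : ℂ) * Complex.I)) * Am1 i j
              - (∫ s in Ioc (-1:ℝ) 0,
                  Complex.exp ((z + ((2*Real.pi*(k:ℝ) : ℝ) : ℂ) * Complex.I) * s) * A2 s i j)
              - (z + ((2*Real.pi*(k:ℝ) : ℝ) : ℂ) * Complex.I)⁻¹ * (∫ s in Ioc (-1:ℝ) 0,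
                  Complex.exp ((z + ((2*Real.pi*(k:ℝ) : ℝ) : ℂ) * Complex.I) * s) * A3 s i j) := by
          funext z
          exact NN_apply Am1 A2 A3 _ i j
        rw [heq]
        apply DifferentiableOn.sub
        apply DifferentiableOn.sub
        apply DifferentiableOn.sub
        · exact (differentiable_const _).differentiableOn
        · exact (((differentiable_id.add_const _).neg.cexp).mul_const _).differentiableOn
        · exact ((diff_exp_integral _ (hI2 i j)).comp
            (differentiable_id.add_const _)).differentiableOn
        · apply DifferentiableOn.mul
          · exact DifferentiableOn.inv (differentiable_id.add_const _).differentiableOn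
              (fun z hz => hknz z hz)
          · exact ((diff_exp_integral _ (hI3 i j)).comp
              (differentiable_id.add_const _)).differentiableOn
      have hinvdc : DiffContOnCl ℂ (fun z => (F k z)⁻¹) (ball z0 r) := by
        constructor
        · exact (hFdiffC.mono ball_subset_closedBall).inv hexz
        · rw [closure_ball z0 hrpos.ne']
          exact hFdiffC.continuousOn.inv₀ hFcl
      have hfront : ∀ z ∈ frontier (ball z0 r), ‖(F k z)⁻¹‖ ≤ (m/2)⁻¹ := by
        rw [frontier_ball z0 hrpos.ne']
        intro z hz
        rw [norm_inv]
        exact inv_anti₀ (half_pos hm) (hFlow z hz)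
      have hmax := Complex.norm_le_of_forall_mem_frontier_norm_le isBounded_ball hinvdc hfront
        (z := z0) (by rw [closure_ball z0 hrpos.ne']; exact mem_closedBall_self hrpos.le)
      have hz0ne : F k z0 ≠ 0 := hFcl z0 (mem_closedBall_self hrpos.le)
      rw [norm_inv] at hmax
      have h5 : (m/2)⁻¹ < (‖F k z0‖)⁻¹ := by
        have hpos : 0 < ‖F k z0‖ := norm_pos_iff.mpr hz0ne
        exact (inv_lt_inv₀ (half_pos hm) hpos).2 hkpt
      linarith

lemma memLp_to_integrable (g : ℝ → ℂ)
    (hg : MeasureTheory.MemLp g 2 (volume.restrict (Set.Ioc (-1:ℝ) 0))) :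
    IntegrableOn g (Ioc (-1:ℝ) 0) := by
  haveI : IsFiniteMeasure (volume.restrict (Set.Ioc (-1:ℝ) 0)) := by
    constructor
    rw [Measure.restrict_apply_univ]
    simp [Real.volume_Ioc]
  have h1 : MeasureTheory.MemLp g 1 (volume.restrict (Set.Ioc (-1:ℝ) 0)) :=
    hg.mono_exponent (by norm_num)
  exact (memLp_one_iff_integrable.1 h1)

theorem exponential_stability_iff
    (n : ℕ) (hn : 0 < n) (Am1 : Matrix (Fin n) (Fin n) ℂ)
    (A2 A3 : ℝ → Matrix (Fin n) (Fin n) ℂ)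
    (hA2 : ∀ i j, MeasureTheory.MemLp (fun θ => A2 θ i j) 2
      (volume.restrict (Set.Ioc (-1:ℝ) 0)))
    (hA3 : ∀ i j, MeasureTheory.MemLp (fun θ => A3 θ i j) 2
      (volume.restrict (Set.Ioc (-1:ℝ) 0))) :
    (∃ α : ℝ, 0 < α ∧ ∀ lam : ℂ, (Delta Am1 A2 A3 lam).det = 0 → lam.re ≤ -α) ↔
      ((∀ lam : ℂ, (Delta Am1 A2 A3 lam).det = 0 → lam.re < 0) ∧
        (∀ μ ∈ spectrum ℂ Am1, ‖μ‖ < 1)) := by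
  have hI2 : ∀ i j, IntegrableOn (fun s => A2 s i j) (Ioc (-1:ℝ) 0) :=
    fun i j => memLp_to_integrable _ (hA2 i j)
  have hI3 : ∀ i j, IntegrableOn (fun s => A3 s i j) (Ioc (-1:ℝ) 0) :=
    fun i j => memLp_to_integrable _ (hA3 i j)
  constructor
  · rintro ⟨α, hα, hzero⟩
    exact ⟨fun lam h => lt_of_le_of_lt (hzero lam h) (by linarith),
      forward2 Am1 A2 A3 hn hI2 hI3 α hα hzero⟩
  · rintro ⟨hb1, hb2⟩
    exact backward Am1 A2 A3 hn hI2 hI3 hb1 hb2
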